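/- For n ≥ 4, the spectral radius of Q_n^1 is strictly less than n − 1, and for n = 3 it equals n − 1 = 2. -/

import Mathlib

open SimpleGraph Finset

attribute [local instance] Classical.propDecidable

/-- The (adjacency) spectral radius of a graph, as the largest adjacency eigenvalue. -/
noncomputable def specRad {V : Type*} [Fintype V] [DecidableEq V] (G : SimpleGraph V) : ℝ :=
  sSup (spectrum ℝ (G.adjMatrix ℝ))

/-- The signless Laplacian matrix `Q = D + A` of a graph. -/
noncomputable def signlessLaplacian {V : Type*} [Fintype V] [DecidableEq V]
    (G : SimpleGraph V) : Matrix V V ℝ :=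
  Matrix.diagonal (fun v => (G.degree v : ℝ)) + G.adjMatrix ℝ

/-- The signless Laplacian spectral radius of a graph. -/
noncomputable def qSpec {V : Type*} [Fintype V] [DecidableEq V] (G : SimpleGraph V) : ℝ :=
  sSup (spectrum ℝ (signlessLaplacian G))

/-- A graph is traceable if it has a Hamilton path. -/
def SimpleGraph.IsTraceable {V : Type*} (G : SimpleGraph V) : Prop :=
  ∃ (u v : V) (p : G.Walk u v), p.IsHamiltonian

/-- A graph on `Fin m ⊕ Fin n` is bipartite with bipartition `{Fin m, Fin n}`:
all edges go between the two parts. -/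
def CrossOnly {m n : ℕ} (G : SimpleGraph (Fin m ⊕ Fin n)) : Prop :=
  (∀ x y : Fin m, ¬ G.Adj (Sum.inl x) (Sum.inl y)) ∧
  (∀ x y : Fin n, ¬ G.Adj (Sum.inr x) (Sum.inr y))

/-- The graph `Q_n^k = K_{k,n-k-1} ⊔ Φ_{n-k,k+1}`: a vertex `inl x` with `x < k` is joined to
all of the right side, a vertex `inr y` with `y < n-k-1` is joined to all of the left side,
and there are no other edges. -/
def Qgraph (n k : ℕ) : SimpleGraph (Fin n ⊕ Fin n) :=
  SimpleGraph.fromRel (fun a b =>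
    match a, b with
    | Sum.inl x, Sum.inr y => x.val < k ∨ y.val < n - k - 1
    | _, _ => False)

/-- The graph `R_n^k = K_{k,k} ∪ K_{n-k,n-k}` (disjoint union). -/
def Rgraph (n k : ℕ) : SimpleGraph (Fin n ⊕ Fin n) :=
  SimpleGraph.fromRel (fun a b =>
    match a, b with
    | Sum.inl x, Sum.inr y => (x.val < k ∧ y.val < k) ∨ (k ≤ x.val ∧ k ≤ y.val)
    | _, _ => False)

/-- The graph `S_n^k = K_{k,n-k-1} ⊔ Φ_{n-k,k}` on parts of sizes `n` and `n-1`. -/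
def Sgraph (n k : ℕ) : SimpleGraph (Fin n ⊕ Fin (n - 1)) :=
  SimpleGraph.fromRel (fun a b =>
    match a, b with
    | Sum.inl x, Sum.inr y => x.val < k ∨ y.val < n - k - 1
    | _, _ => False)

/-- The quasi-complement of a bipartite graph: `inl x` and `inr y` are adjacent iff they are
nonadjacent in `G`; no edges inside the parts. -/
def quasiComplement {m n : ℕ} (G : SimpleGraph (Fin m ⊕ Fin n)) : SimpleGraph (Fin m ⊕ Fin n) :=
  SimpleGraph.fromRel (fun a b =>
    match a, b with
    | Sum.inl x, Sum.inr y => ¬ G.Adj (Sum.inl x) (Sum.inr y)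
    | _, _ => False)

/-- `G` is isomorphic to a subgraph of `H`. -/
def IsoSubgraph {V W : Type*} (G : SimpleGraph V) (H : SimpleGraph W) : Prop :=
  ∃ H' : SimpleGraph W, H' ≤ H ∧ Nonempty (G ≃g H')

/-- For `n ≥ 4`, `ρ(Q_n^1) < n - 1`, and for `n = 3`, `ρ(Q_n^1) = n - 1 = 2`. -/
lemma qadj_lr {n : ℕ} (x y : Fin n) :
    (Qgraph n 1).Adj (Sum.inl x) (Sum.inr y) ↔ (x.val = 0 ∨ y.val < n - 2) := by
  simp [Qgraph, SimpleGraph.fromRel_adj]; omega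

lemma qadj_ll {n : ℕ} (x y : Fin n) : ¬ (Qgraph n 1).Adj (Sum.inl x) (Sum.inl y) := by
  simp [Qgraph, SimpleGraph.fromRel_adj]

lemma qadj_rr {n : ℕ} (x y : Fin n) : ¬ (Qgraph n 1).Adj (Sum.inr x) (Sum.inr y) := by
  simp [Qgraph, SimpleGraph.fromRel_adj]

lemma qadj_rl {n : ℕ} (y x : Fin n) :
    (Qgraph n 1).Adj (Sum.inr y) (Sum.inl x) ↔ (x.val = 0 ∨ y.val < n - 2) := by
  rw [SimpleGraph.adj_comm]; exact qadj_lr x y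

lemma sum_ite_filter {n : ℕ} (P : Fin n → Prop) [DecidablePred P] (f : Fin n → ℝ) :
    (∑ y ∈ univ.filter P, f y) = ∑ y : Fin n, (if P y then (1:ℝ) else 0) * f y := by
  rw [Finset.sum_filter]
  exact Finset.sum_congr rfl (fun y _ => by by_cases h : P y <;> simp [h])

lemma quartic (n : ℕ) (hn : 3 ≤ n) (lam : ℝ)
    (hlam : lam ∈ spectrum ℝ ((Qgraph n 1).adjMatrix ℝ)) (h0 : lam ≠ 0) :
    (lam^2 - (n:ℝ)*((n:ℝ)-2))*(lam^2 - 2) = 2*((n:ℝ)-2) := by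
  -- extract eigenvector
  rw [spectrum.mem_iff, Matrix.isUnit_iff_isUnit_det, isUnit_iff_ne_zero, not_not] at hlam
  obtain ⟨v, hv0, hv⟩ := (Matrix.exists_mulVec_eq_zero_iff).2 hlam
  have hAv : ∀ i, ((Qgraph n 1).adjMatrix ℝ).mulVec v i = lam * v i := by
    intro i
    have h := congrFun hv i
    rw [Matrix.sub_mulVec] at h
    have h2 : (algebraMap ℝ (Matrix (Fin n ⊕ Fin n) (Fin n ⊕ Fin n) ℝ) lam).mulVec v i
        = lam * v i := by
      rw [Matrix.algebraMap_eq_diagonal, Matrix.mulVec_diagonal]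
      simp [Pi.algebraMap_apply]
    have h3 := h
    rw [Pi.sub_apply, Pi.zero_apply, sub_eq_zero] at h3
    rw [← h3, h2]
  have hrow : ∀ i, (∑ j, (if (Qgraph n 1).Adj i j then (1:ℝ) else 0) * v j) = lam * v i := by
    intro i
    have := hAv i
    rwa [Matrix.mulVec, dotProduct] at this
  -- definitions
  have hn0 : 0 < n := by omega
  set z : Fin n := ⟨0, hn0⟩ with hz
  set a : ℝ := v (Sum.inl z) with ha
  set c : ℝ := ∑ y ∈ univ.filter (fun y : Fin n => y.val < n - 2), v (Sum.inr y) with hc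
  set w : ℝ := ∑ y ∈ univ.filter (fun y : Fin n => ¬ y.val < n - 2), v (Sum.inr y) with hw
  set S : ℝ := ∑ x ∈ univ.filter (fun x : Fin n => x.val ≠ 0), v (Sum.inl x) with hS
  -- row at inl x, x ≠ 0
  have eq1 : ∀ x : Fin n, x.val ≠ 0 → lam * v (Sum.inl x) = c := by
    intro x hx
    have h := hrow (Sum.inl x)
    rw [Fintype.sum_sum_type] at h
    have h1 : (∑ x' : Fin n, (if (Qgraph n 1).Adj (Sum.inl x) (Sum.inl x') then (1:ℝ) else 0) * v (Sum.inl x')) = 0 := by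
      apply Finset.sum_eq_zero; intro x' _; simp [qadj_ll]
    have h2 : (∑ y : Fin n, (if (Qgraph n 1).Adj (Sum.inl x) (Sum.inr y) then (1:ℝ) else 0) * v (Sum.inr y)) = c := by
      rw [hc, sum_ite_filter]
      exact Finset.sum_congr rfl (fun y _ => by
        by_cases hy : y.val < n - 2 <;> simp [qadj_lr, hx, hy])
    rw [h1, h2, zero_add] at h
    exact h.symm
  -- row at inl 0
  have eq2 : lam * a = c + w := by
    have h := hrow (Sum.inl z)
    rw [Fintype.sum_sum_type] at h
    have h1 : (∑ x' : Fin n, (if (Qgraph n 1).Adj (Sum.inl z) (Sum.inl x') then (1:ℝ) else 0) * v (Sum.inl x')) = 0 := by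
      apply Finset.sum_eq_zero; intro x' _; simp [qadj_ll]
    have h2 : (∑ y : Fin n, (if (Qgraph n 1).Adj (Sum.inl z) (Sum.inr y) then (1:ℝ) else 0) * v (Sum.inr y)) = c + w := by
      have : ∀ y : Fin n, (Qgraph n 1).Adj (Sum.inl z) (Sum.inr y) := by
        intro y; rw [qadj_lr]; left; rfl
      simp only [this, if_true, one_mul]
      rw [hc, hw, Finset.sum_filter_add_sum_filter_not]
    rw [h1, h2, zero_add] at h
    exact h.symm
  -- rows at inr y
  have eqr : ∀ y : Fin n, lam * v (Sum.inr y) =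
      (if y.val < n - 2 then a + S else a) := by
    intro y
    have h := hrow (Sum.inr y)
    rw [Fintype.sum_sum_type] at h
    have h1 : (∑ y' : Fin n, (if (Qgraph n 1).Adj (Sum.inr y) (Sum.inr y') then (1:ℝ) else 0) * v (Sum.inr y')) = 0 := by
      apply Finset.sum_eq_zero; intro y' _; simp [qadj_rr]
    rw [h1, add_zero] at h
    by_cases hy : y.val < n - 2
    · have h2 : (∑ x : Fin n, (if (Qgraph n 1).Adj (Sum.inr y) (Sum.inl x) then (1:ℝ) else 0) * v (Sum.inl x)) = a + S := by
        have : ∀ x : Fin n, (Qgraph n 1).Adj (Sum.inr y) (Sum.inl x) := by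
          intro x; rw [qadj_rl]; right; exact hy
        simp only [this, if_true, one_mul]
        rw [ha, hS]
        rw [← Finset.sum_filter_add_sum_filter_not univ (fun x : Fin n => x.val = 0) (fun x => v (Sum.inl x))]
        congr 1
        have : univ.filter (fun x : Fin n => x.val = 0) = {z} := by
          ext x; simp [Fin.ext_iff, hz]
        rw [this, Finset.sum_singleton]
      rw [h2] at h
      rw [if_pos hy]; exact h.symm
    · have h2 : (∑ x : Fin n, (if (Qgraph n 1).Adj (Sum.inr y) (Sum.inl x) then (1:ℝ) else 0) * v (Sum.inl x)) = a := by
        have hiff : ∀ x : Fin n, (Qgraph n 1).Adj (Sum.inr y) (Sum.inl x) ↔ x.val = 0 := by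
          intro x; rw [qadj_rl]; simp [hy]
        have hzz : univ.filter (fun x : Fin n => x.val = 0) = {z} := by
          ext x; simp [Fin.ext_iff, hz]
        calc (∑ x : Fin n, (if (Qgraph n 1).Adj (Sum.inr y) (Sum.inl x) then (1:ℝ) else 0) * v (Sum.inl x))
            = ∑ x : Fin n, (if x.val = 0 then (1:ℝ) else 0) * v (Sum.inl x) :=
              Finset.sum_congr rfl (fun x _ => by
                by_cases hx : x.val = 0 <;> simp [hiff, hx])
          _ = ∑ x ∈ univ.filter (fun x : Fin n => x.val = 0), v (Sum.inl x) :=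
              (sum_ite_filter _ _).symm
          _ = a := by rw [hzz, Finset.sum_singleton, ha]
      rw [h2] at h
      rw [if_neg hy]; exact h.symm
  -- cardinalities
  have hcardB : (univ.filter fun x : Fin n => x.val ≠ 0).card = n - 1 := by
    have : (univ.filter fun x : Fin n => x.val ≠ 0) = univ.erase z := by
      ext x; simp [Fin.ext_iff, hz]
    rw [this, Finset.card_erase_of_mem (Finset.mem_univ _)]
    simp
  have hcardC : (univ.filter fun y : Fin n => y.val < n - 2).card = n - 2 := by
    have : (univ.filter fun y : Fin n => y.val < n - 2) = Finset.Iio (⟨n - 2, by omega⟩ : Fin n) := by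
      ext y; simp [Fin.lt_def]
    rw [this, Fin.card_Iio]
  have hcardW : (univ.filter fun y : Fin n => ¬ y.val < n - 2).card = 2 := by
    have h1 := Finset.card_filter_add_card_filter_not (s := (univ : Finset (Fin n)))
      (p := fun y : Fin n => y.val < n - 2)
    rw [hcardC] at h1
    simp only [Finset.card_univ, Fintype.card_fin] at h1
    omega
  -- summed equations
  have hSsum : lam * S = ((n:ℝ) - 1) * c := by
    rw [hS, Finset.mul_sum]
    rw [Finset.sum_congr rfl (fun x hx => eq1 x (by simpa using hx))]
    rw [Finset.sum_const, hcardB, nsmul_eq_mul]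
    congr 1
    push_cast [Nat.cast_sub (by omega : 1 ≤ n)]
    ring
  have hcsum : lam * c = ((n:ℝ) - 2) * (a + S) := by
    rw [hc, Finset.mul_sum]
    rw [Finset.sum_congr rfl (fun y hy => by
      rw [eqr y, if_pos (by simpa using hy)])]
    rw [Finset.sum_const, hcardC, nsmul_eq_mul]
    congr 1
    push_cast [Nat.cast_sub (by omega : 2 ≤ n)]
    ring
  have hwsum : lam * w = 2 * a := by
    rw [hw, Finset.mul_sum]
    rw [Finset.sum_congr rfl (fun y hy => by
      rw [eqr y, if_neg (by simpa using hy)])]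
    rw [Finset.sum_const, hcardW, nsmul_eq_mul]
    norm_num
  -- nondegeneracy
  have hcw : ¬ (c = 0 ∧ w = 0) := by
    rintro ⟨hc0, hw0⟩
    apply hv0
    have ha0 : a = 0 := by
      have h := eq2; rw [hc0, hw0, add_zero] at h
      exact (mul_eq_zero.mp h).resolve_left h0
    have hS0 : S = 0 := by
      have h := hSsum; rw [hc0, mul_zero] at h
      exact (mul_eq_zero.mp h).resolve_left h0
    funext i
    cases i with
    | inl x =>
      by_cases hx : x.val = 0
      · have : x = z := by simp [Fin.ext_iff, hz, hx]
        rw [this]; exact ha0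
      · have h := eq1 x hx; rw [hc0] at h
        exact (mul_eq_zero.mp h).resolve_left h0
    | inr y =>
      have h := eqr y
      by_cases hy : y.val < n - 2
      · rw [if_pos hy, ha0, hS0, add_zero] at h
        exact (mul_eq_zero.mp h).resolve_left h0
      · rw [if_neg hy, ha0] at h
        exact (mul_eq_zero.mp h).resolve_left h0
  -- the two linear relations
  have hn2 : ((n:ℝ) - 2) ≠ 0 := by
    have : (3:ℝ) ≤ (n:ℝ) := by exact_mod_cast hn
    linarith
  have h1 : (lam^2 - (n:ℝ)*((n:ℝ)-2)) * c = ((n:ℝ)-2) * w := by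
    linear_combination lam * hcsum + ((n:ℝ)-2) * eq2 + ((n:ℝ)-2) * hSsum
  have h2 : (lam^2 - 2) * w = 2 * c := by
    linear_combination lam * hwsum + 2 * eq2
  have hcne : c ≠ 0 := by
    intro hc0
    apply hcw
    refine ⟨hc0, ?_⟩
    have := h1; rw [hc0, mul_zero] at this
    exact ((mul_eq_zero.mp this.symm).resolve_left hn2)
  exact mul_right_cancel₀ hcne (by linear_combination (lam^2-2) * h1 + ((n:ℝ)-2) * h2)

lemma qbound3 : ∀ x ∈ spectrum ℝ ((Qgraph 3 1).adjMatrix ℝ), x ≤ 2 := by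
  intro x hx
  by_cases h0 : x = 0
  · rw [h0]; norm_num
  · have hq := quartic 3 (by norm_num) x hx h0
    norm_num at hq
    by_contra hgt
    push_neg at hgt
    nlinarith [sq_nonneg x, sq_nonneg (x - 2)]
lemma zero_mem_spec (n : ℕ) (hn : 3 ≤ n) :
    (0:ℝ) ∈ spectrum ℝ ((Qgraph n 1).adjMatrix ℝ) := by
  rw [spectrum.mem_iff, Matrix.isUnit_iff_isUnit_det, isUnit_iff_ne_zero, not_not,
    ← Matrix.exists_mulVec_eq_zero_iff]
  refine ⟨(Pi.single (Sum.inl (⟨1, by omega⟩ : Fin n)) (1:ℝ))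
      - Pi.single (Sum.inl (⟨2, by omega⟩ : Fin n)) 1, ?_, ?_⟩
  · intro h
    have := congrFun h (Sum.inl (⟨1, by omega⟩ : Fin n))
    simp [Pi.single_apply, Fin.ext_iff] at this
  · rw [map_zero, zero_sub, Matrix.neg_mulVec, neg_eq_zero, Matrix.mulVec_sub]
    funext i
    rw [Matrix.mulVec_single, Matrix.mulVec_single]
    simp only [MulOpposite.op_one, one_smul, Matrix.col_apply']
    simp only [Pi.sub_apply, mul_one, sub_eq_zero]
    cases i with
    | inl x => simp [SimpleGraph.adjMatrix_apply, qadj_ll]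
    | inr y =>
      simp only [SimpleGraph.adjMatrix_apply]
      by_cases hy : y.val < n - 2 <;> simp [qadj_rl, hy]

lemma two_mem_spec3 : (2:ℝ) ∈ spectrum ℝ ((Qgraph 3 1).adjMatrix ℝ) := by
  rw [spectrum.mem_iff, Matrix.isUnit_iff_isUnit_det, isUnit_iff_ne_zero, not_not,
    ← Matrix.exists_mulVec_eq_zero_iff]
  refine ⟨Sum.elim ![2,1,1] ![2,1,1], ?_, ?_⟩
  · intro h
    have := congrFun h (Sum.inl 0)
    simp at this
  · funext i
    have hval : ∀ i : Fin 3 ⊕ Fin 3,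
        (algebraMap ℝ (Matrix (Fin 3 ⊕ Fin 3) (Fin 3 ⊕ Fin 3) ℝ) 2).mulVec (Sum.elim ![2,1,1] ![2,1,1]) i
        = 2 * (Sum.elim ![2,1,1] ![2,1,1] : Fin 3 ⊕ Fin 3 → ℝ) i := by
      intro i
      rw [Matrix.algebraMap_eq_diagonal, Matrix.mulVec_diagonal]
      simp [Pi.algebraMap_apply]
    rw [Matrix.sub_mulVec, Pi.sub_apply, hval, Pi.zero_apply, sub_eq_zero,
      Matrix.mulVec, dotProduct]
    rw [Fintype.sum_sum_type]
    simp only [SimpleGraph.adjMatrix_apply]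
    cases i with
    | inl x =>
      fin_cases x <;>
      · rw [Fin.sum_univ_three, Fin.sum_univ_three]
        norm_num [qadj_ll, qadj_lr, Matrix.cons_val_two, Matrix.vecHead, Matrix.vecTail]
    | inr y =>
      fin_cases y <;>
      · rw [Fin.sum_univ_three, Fin.sum_univ_three]
        norm_num [qadj_rr, qadj_rl, Matrix.cons_val_two, Matrix.vecHead, Matrix.vecTail]

theorem stmt_9 (n : ℕ) :
    (4 ≤ n → specRad (Qgraph n 1) < (n : ℝ) - 1) ∧
    (n = 3 → specRad (Qgraph n 1) = 2) := by
  constructor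
  · intro hn4
    have hn3 : 3 ≤ n := by omega
    have hm : (4:ℝ) ≤ (n:ℝ) := by exact_mod_cast hn4
    unfold specRad
    have hfin : (spectrum ℝ ((Qgraph n 1).adjMatrix ℝ)).Finite := Matrix.finite_spectrum _
    have hne : (spectrum ℝ ((Qgraph n 1).adjMatrix ℝ)).Nonempty := ⟨0, zero_mem_spec n hn3⟩
    have hmem := hne.csSup_mem hfin
    set lam := sSup (spectrum ℝ ((Qgraph n 1).adjMatrix ℝ)) with hlam
    by_cases h0 : lam = 0
    · rw [h0]; linarith
    · by_contra hge
      push_neg at hge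
      have hq := quartic n hn3 lam hmem h0
      have hl2 : ((n:ℝ)-1)^2 ≤ lam^2 := by nlinarith
      have hA : (1:ℝ) ≤ lam^2 - (n:ℝ)*((n:ℝ)-2) := by nlinarith
      have hB : (n:ℝ)^2 - 2*(n:ℝ) - 1 ≤ lam^2 - 2 := by nlinarith
      have hBpos : (0:ℝ) < (n:ℝ)^2 - 2*(n:ℝ) - 1 := by nlinarith
      have := mul_le_mul hA hB (le_of_lt hBpos) (by linarith)
      nlinarith
  · intro h3
    subst h3
    unfold specRad
    refine le_antisymm (Real.sSup_le qbound3 (by norm_num)) (le_csSup ⟨2, qbound3⟩ two_mem_spec3)
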